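/- Let d ≥ 1, n ≥ 1 with 4 | n, and let G be the grid graph of dimensions (n/4) × (n/4) × n × ⋯ × n (d factors in total, the first two of side n/4). Then for every 1/2 ≤ α < 1, any α-separator of G has cardinality at least (1−α)·n^{d−1}/(16d). -/

import Mathlib

/-- The grid graph on the box `∏ i, {0, …, r i − 1}`: two vertices are adjacent
iff they differ in exactly one coordinate and there by exactly 1. -/
def boxGraph {d : ℕ} (r : Fin d → ℕ) : SimpleGraph ((i : Fin d) → Fin (r i)) where
  Adj v w := ∃ k, (∀ j, j ≠ k → v j = w j) ∧
    ((v k : ℕ) + 1 = (w k : ℕ) ∨ (w k : ℕ) + 1 = (v k : ℕ))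
  symm := ⟨by
    rintro v w ⟨k, h1, h2⟩
    exact ⟨k, fun j hj => (h1 j hj).symm, h2.symm⟩⟩
  loopless := ⟨by
    rintro v ⟨k, _, h2⟩
    omega⟩

/-- The `d`-dimensional grid graph `G_d(n)` on `{0, …, n−1}^d`. -/
def gridGraph (d n : ℕ) : SimpleGraph ((_ : Fin d) → Fin n) :=
  boxGraph (fun _ => n)

/-- The graph `G` with the vertices of `C` avoided: edges of `G` with both
endpoints outside `C`. Its reachability classes on `Cᶜ` are the connected
components of `G` with `C` removed. -/
def avoidGraph {V : Type*} (G : SimpleGraph V) (C : Set V) : SimpleGraph V where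
  Adj a b := G.Adj a b ∧ a ∉ C ∧ b ∉ C
  symm := ⟨fun _ _ ⟨h, ha, hb⟩ => ⟨h.symm, hb, ha⟩⟩
  loopless := ⟨fun _ ⟨h, _, _⟩ => G.irrefl h⟩

namespace SqueezedGridAux

/-- The "staircase" point set between `a` and `b`: at stage `k`, coordinates
`< k` agree with `b`, coordinates `> k` agree with `a`, coordinate `k` free. -/
def Stair {d : ℕ} {r : Fin d → ℕ} (a b v : (i : Fin d) → Fin (r i)) : Prop :=
  ∃ k : ℕ, (∀ j : Fin d, (j : ℕ) < k → v j = b j) ∧ (∀ j : Fin d, k < (j : ℕ) → v j = a j)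

def rho (d : ℕ) (r : Fin d → ℕ) (k : ℕ) : ℕ := if h : k < d then r ⟨k, h⟩ else 1

lemma lineReach {d : ℕ} {r : Fin d → ℕ} (C : Set ((i : Fin d) → Fin (r i)))
    (x : (i : Fin d) → Fin (r i)) (k : Fin d)
    (hC : ∀ t : Fin (r k), Function.update x k t ∉ C) (t : Fin (r k)) :
    (avoidGraph (boxGraph r) C).Reachable x (Function.update x k t) := by
  have aux : ∀ m (hm : m < r k),
      (avoidGraph (boxGraph r) C).Reachable (Function.update x k ⟨0, t.pos⟩)
        (Function.update x k ⟨m, hm⟩) := by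
    intro m
    induction m with
    | zero => exact fun hm => SimpleGraph.Reachable.refl _
    | succ p ih =>
      intro hm
      have hp : p < r k := by omega
      refine (ih hp).trans (SimpleGraph.Adj.reachable ?_)
      dsimp only [avoidGraph, boxGraph]
      refine ⟨⟨k, fun j hj => ?_, ?_⟩, hC _, hC _⟩
      · rw [Function.update_of_ne hj, Function.update_of_ne hj]
      · left
        rw [Function.update_self, Function.update_self]
  have h1 := ((aux (x k).1 (x k).2).symm.trans (aux t.1 t.2))
  simp only [Fin.eta] at h1
  rwa [Function.update_eq_self] at h1

lemma stairReach {d : ℕ} {r : Fin d → ℕ} (C : Set ((i : Fin d) → Fin (r i)))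
    (a b : (i : Fin d) → Fin (r i)) (h : ∀ v, Stair a b v → v ∉ C) :
    (avoidGraph (boxGraph r) C).Reachable a b := by
  classical
  have key : ∀ k : ℕ, k ≤ d → (avoidGraph (boxGraph r) C).Reachable a
      (fun i => if (i : ℕ) < k then b i else a i) := by
    intro k
    induction k with
    | zero =>
      intro _
      have he : (fun i : Fin d => if (i : ℕ) < 0 then b i else a i) = a := by
        funext i; simp
      rw [he]
    | succ p ih =>
      intro hp
      have hpd : p < d := hp
      have hprev := ih (by omega)
      set c : (i : Fin d) → Fin (r i) := fun i => if (i : ℕ) < p then b i else a i with hc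
      have hstep : (fun i : Fin d => if (i : ℕ) < p + 1 then b i else a i)
          = Function.update c ⟨p, hpd⟩ (b ⟨p, hpd⟩) := by
        funext i
        by_cases hi : i = ⟨p, hpd⟩
        · subst hi
          rw [Function.update_self, if_pos (Nat.lt_succ_self p)]
        · have hip : (i : ℕ) ≠ p := fun hh => hi (Fin.ext hh)
          rw [Function.update_of_ne hi]
          simp only [hc]
          by_cases h2 : (i : ℕ) < p
          · rw [if_pos (by omega), if_pos h2]
          · rw [if_neg (by omega), if_neg h2]
      rw [hstep]
      refine hprev.trans (lineReach C c ⟨p, hpd⟩ ?_ (b ⟨p, hpd⟩))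
      intro t
      apply h
      refine ⟨p, fun j hj => ?_, fun j hj => ?_⟩
      · have hjne : j ≠ ⟨p, hpd⟩ := by
          intro hh; rw [hh] at hj; simp at hj
        rw [Function.update_of_ne hjne]
        simp only [hc, if_pos hj]
      · have hjne : j ≠ ⟨p, hpd⟩ := by
          intro hh; rw [hh] at hj; simp at hj
        rw [Function.update_of_ne hjne]
        simp only [hc, if_neg (show ¬ (j : ℕ) < p by omega)]
  have hd := key d le_rfl
  have hb : (fun i : Fin d => if (i : ℕ) < d then b i else a i) = b := by
    funext i; simp [i.isLt]
  rwa [hb] at hd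

end SqueezedGridAux

namespace SqueezedGridAux

lemma load_le {d : ℕ} {r : Fin d → ℕ} (c : (i : Fin d) → Fin (r i))
    (S : Finset (((i : Fin d) → Fin (r i)) × ((i : Fin d) → Fin (r i))))
    (hS : ∀ p ∈ S, Stair p.1 p.2 c) :
    S.card ≤ Fintype.card ((i : Fin d) → Fin (r i)) * ∑ k ∈ Finset.range (d + 1), rho d r k := by
  classical
  have hsub : S ⊆ (Finset.range (d + 1)).biUnion (fun k => S.filter fun p =>
      (∀ j : Fin d, (j : ℕ) < k → c j = p.2 j) ∧ (∀ j : Fin d, k < (j : ℕ) → c j = p.1 j)) := by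
    intro p hp
    obtain ⟨k, h1, h2⟩ := hS p hp
    refine Finset.mem_biUnion.mpr ⟨min k d, Finset.mem_range.mpr (by omega),
      Finset.mem_filter.mpr ⟨hp, fun j hj => h1 j (by omega), fun j hj => h2 j ?_⟩⟩
    have := j.isLt; omega
  refine le_trans (Finset.card_le_card hsub) (le_trans Finset.card_biUnion_le ?_)
  rw [Finset.mul_sum]
  refine Finset.sum_le_sum fun k hk => ?_
  by_cases hkd : k < d
  · have hle : (S.filter fun p =>
        (∀ j : Fin d, (j : ℕ) < k → c j = p.2 j) ∧ (∀ j : Fin d, k < (j : ℕ) → c j = p.1 j)).card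
        ≤ Fintype.card (((i : Fin d) → Fin (r i)) × Fin (r ⟨k, hkd⟩)) := by
      rw [← Finset.card_univ]
      apply Finset.card_le_card_of_injOn
        (fun p => ((fun j : Fin d => if (j : ℕ) ≤ k then p.1 j else p.2 j), p.2 ⟨k, hkd⟩))
        (fun _ _ => Finset.mem_univ _)
      intro p hp q hq hpq
      simp only [Finset.mem_coe, Finset.mem_filter] at hp hq
      obtain ⟨-, hp1, hp2⟩ := hp
      obtain ⟨-, hq1, hq2⟩ := hq
      have h1 : (fun j : Fin d => if (j : ℕ) ≤ k then p.1 j else p.2 j)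
          = (fun j : Fin d => if (j : ℕ) ≤ k then q.1 j else q.2 j) := congrArg Prod.fst hpq
      have h2 : p.2 ⟨k, hkd⟩ = q.2 ⟨k, hkd⟩ := congrArg Prod.snd hpq
      have hfst : p.1 = q.1 := by
        funext j
        rcases le_or_gt (j : ℕ) k with hj | hj
        · have := congrFun h1 j
          simpa [hj] using this
        · exact (hp2 j hj).symm.trans (hq2 j hj)
      have hsnd : p.2 = q.2 := by
        funext j
        rcases Nat.lt_trichotomy (j : ℕ) k with hj | hj | hj
        · exact (hp1 j hj).symm.trans (hq1 j hj)
        · have hje : j = ⟨k, hkd⟩ := Fin.ext hj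
          rw [hje]; exact h2
        · have := congrFun h1 j
          simpa [Nat.not_le.mpr hj] using this
      exact Prod.ext hfst hsnd
    refine le_trans hle (le_of_eq ?_)
    rw [Fintype.card_prod, Fintype.card_fin]
    congr 1
    unfold rho
    rw [dif_pos hkd]
  · have hle : (S.filter fun p =>
        (∀ j : Fin d, (j : ℕ) < k → c j = p.2 j) ∧ (∀ j : Fin d, k < (j : ℕ) → c j = p.1 j)).card
        ≤ Fintype.card ((i : Fin d) → Fin (r i)) := by
      rw [← Finset.card_univ]
      apply Finset.card_le_card_of_injOn (fun p => p.1) (fun _ _ => Finset.mem_univ _)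
      intro p hp q hq hpq
      simp only [Finset.mem_coe, Finset.mem_filter] at hp hq
      have hp2 : p.2 = c := by
        funext j
        exact (hp.2.1 j (by have := j.isLt; omega)).symm
      have hq2 : q.2 = c := by
        funext j
        exact (hq.2.1 j (by have := j.isLt; omega)).symm
      exact Prod.ext hpq (hp2.trans hq2.symm)
    refine le_trans hle (le_of_eq ?_)
    unfold rho
    rw [dif_neg hkd, mul_one]

end SqueezedGridAux

set_option maxHeartbeats 1000000 in
open SqueezedGridAux in
/-- Claim in Section 3: let `4 ∣ n` and `G` be the `(n/4) × (n/4) × n × ⋯ × n`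
grid graph (`d` factors, the first two of side `n/4`). For `1/2 ≤ α < 1`, any
`α`-separator of `G` has cardinality at least `(1−α)·n^{d−1}/(16d)`. -/
theorem squeezed_grid_separator_lower_bound
    (d n : ℕ) (hd : 2 ≤ d) (hn : 1 ≤ n) (hdvd : 4 ∣ n)
    (r : Fin d → ℕ) (hr : ∀ i : Fin d, r i = if (i : ℕ) < 2 then n / 4 else n)
    (α : ℝ) (hα1 : 1 / 2 ≤ α) (hα2 : α < 1)
    (C : Finset ((i : Fin d) → Fin (r i)))
    (hsep : ∀ v ∉ C,
      ({w | (avoidGraph (boxGraph r) ↑C).Reachable v w} : Set _).ncard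
        ≤ α * ((Finset.univ : Finset ((i : Fin d) → Fin (r i))).card : ℝ)) :
    (1 - α) * (n : ℝ) ^ (d - 1) / (16 * d) ≤ (C.card : ℝ) := by
  classical
  have hn4 : 4 ≤ n := Nat.le_of_dvd (by omega) hdvd
  have hr1 : ∀ i, 1 ≤ r i := by intro i; rw [hr i]; split <;> omega
  set G := avoidGraph (boxGraph r) (↑C : Set ((i : Fin d) → Fin (r i))) with hG
  set N : ℕ := Fintype.card ((i : Fin d) → Fin (r i)) with hN
  have hNpos : 0 < N := Fintype.card_pos_iff.mpr ⟨fun i => ⟨0, hr1 i⟩⟩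
  set F : Finset ((i : Fin d) → Fin (r i)) := Finset.univ.filter (fun v => v ∉ C) with hF
  have hCsub : C ⊆ Finset.univ := Finset.subset_univ C
  have hCleN : C.card ≤ N := by rw [← Finset.card_univ] at *; exact Finset.card_le_card hCsub
  have hFcardN : F.card = N - C.card := by
    have hFd : F = Finset.univ \ C := by ext v; simp [hF]
    rw [hFd, Finset.card_sdiff_of_subset hCsub, Finset.card_univ]
  have hFcardR : (F.card : ℝ) = (N : ℝ) - C.card := by
    rw [hFcardN, Nat.cast_sub hCleN]
  set W : ℕ := ∑ k ∈ Finset.range (d + 1), rho d r k with hW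
  set P : Finset (((i : Fin d) → Fin (r i)) × ((i : Fin d) → Fin (r i))) :=
    F.biUnion (fun a => (F.filter fun b => ¬ G.Reachable a b).image (fun b => (a, b))) with hP
  -- cardinality of P as a sum of rows
  have hPcard : P.card = ∑ a ∈ F, (F.filter fun b => ¬ G.Reachable a b).card := by
    rw [hP, Finset.card_biUnion]
    · refine Finset.sum_congr rfl fun a _ => ?_
      exact Finset.card_image_of_injective _ (fun x y hxy => ((Prod.mk.injEq _ _ _ _).mp hxy).2)
    · intro a ha b hb hab
      rw [Function.onFun, Finset.disjoint_left]
      rintro p hp hq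
      rw [Finset.mem_image] at hp hq
      obtain ⟨x, _, rfl⟩ := hp
      obtain ⟨y, _, hy⟩ := hq
      exact hab (congrArg Prod.fst hy).symm
  -- upper bound on P.card via staircases through C
  have hPsub : P ⊆ C.biUnion (fun c => P.filter fun p => Stair p.1 p.2 c) := by
    intro p hp
    have hmem : p.1 ∉ C ∧ p.2 ∉ C ∧ ¬ G.Reachable p.1 p.2 := by
      rw [hP, Finset.mem_biUnion] at hp
      obtain ⟨a, ha, hp2⟩ := hp
      rw [Finset.mem_image] at hp2
      obtain ⟨b, hb, rfl⟩ := hp2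
      rw [Finset.mem_filter] at hb
      exact ⟨(Finset.mem_filter.mp ha).2, (Finset.mem_filter.mp hb.1).2, hb.2⟩
    by_cases hex : ∃ c ∈ C, Stair p.1 p.2 c
    · obtain ⟨c, hc, hst⟩ := hex
      exact Finset.mem_biUnion.mpr ⟨c, hc, Finset.mem_filter.mpr ⟨hp, hst⟩⟩
    · push_neg at hex
      exact absurd (stairReach (↑C) p.1 p.2 (fun v hv hvC => hex v (Finset.mem_coe.mp hvC) hv))
        hmem.2.2
  have hPbound : P.card ≤ C.card * (N * W) :=
    calc P.card ≤ (C.biUnion fun c => P.filter fun p => Stair p.1 p.2 c).card :=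
          Finset.card_le_card hPsub
    _ ≤ ∑ c ∈ C, (P.filter fun p => Stair p.1 p.2 c).card := Finset.card_biUnion_le
    _ ≤ ∑ c ∈ C, N * W := Finset.sum_le_sum fun c _ =>
          load_le c _ (fun p hp => (Finset.mem_filter.mp hp).2)
    _ = C.card * (N * W) := by rw [Finset.sum_const, smul_eq_mul]
  -- lower bound on each row of P
  have hrow : ∀ a ∈ F, ((N : ℝ) - C.card) - α * N
      ≤ ((F.filter fun b => ¬ G.Reachable a b).card : ℝ) := by
    intro a ha
    have haC : a ∉ C := (Finset.mem_filter.mp ha).2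
    have hsplit := Finset.card_filter_add_card_filter_not
      (s := F) (p := fun b => G.Reachable a b)
    have hreach : ((F.filter fun b => G.Reachable a b).card : ℝ) ≤ α * N := by
      have hsub2 : F.filter (fun b => G.Reachable a b)
          ⊆ Finset.univ.filter (fun b => G.Reachable a b) :=
        Finset.filter_subset_filter _ (Finset.subset_univ F)
      have h1 : {w | G.Reachable a w}
          = ↑(Finset.univ.filter fun b => G.Reachable a b) := by
        ext w; simp
      have h2 := hsep a haC
      rw [hG] at h1
      rw [h1, Set.ncard_coe_finset, Finset.card_univ, ← hN] at h2
      refine le_trans ?_ h2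
      exact_mod_cast Finset.card_le_card hsub2
    have hcast : ((F.filter fun b => G.Reachable a b).card : ℝ)
        + ((F.filter fun b => ¬ G.Reachable a b).card : ℝ) = (F.card : ℝ) := by
      exact_mod_cast hsplit
    rw [hFcardR] at hcast
    linarith
  -- combine: lower bound on P.card
  have hsum : ((N : ℝ) - C.card) * (((N : ℝ) - C.card) - α * N) ≤ (P.card : ℝ) := by
    have h1 : ∑ _a ∈ F, (((N : ℝ) - C.card) - α * N)
        ≤ ∑ a ∈ F, ((F.filter fun b => ¬ G.Reachable a b).card : ℝ) :=
      Finset.sum_le_sum hrow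
    rw [Finset.sum_const, nsmul_eq_mul, hFcardR] at h1
    have h2 : ∑ a ∈ F, ((F.filter fun b => ¬ G.Reachable a b).card : ℝ) = (P.card : ℝ) := by
      rw [hPcard]
      push_cast
      ring
    linarith
  -- numeric values of N and W
  have hfilt : (Finset.univ.filter fun i : Fin d => (i : ℕ) < 2)
      = {(⟨0, by omega⟩ : Fin d), ⟨1, by omega⟩} := by
    ext i
    simp only [Finset.mem_filter, Finset.mem_univ, true_and, Finset.mem_insert,
      Finset.mem_singleton, Fin.ext_iff]
    omega
  have hfcard : (Finset.univ.filter fun i : Fin d => (i : ℕ) < 2).card = 2 := by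
    rw [hfilt, Finset.card_insert_of_notMem (by simp [Fin.ext_iff]), Finset.card_singleton]
  have hfcard' : (Finset.univ.filter fun i : Fin d => ¬ (i : ℕ) < 2).card = d - 2 := by
    have h := Finset.card_filter_add_card_filter_not
      (s := (Finset.univ : Finset (Fin d))) (p := fun i : Fin d => (i : ℕ) < 2)
    rw [Finset.card_univ, Fintype.card_fin, hfcard] at h
    omega
  have hprodN : N = (n / 4) ^ 2 * n ^ (d - 2) := by
    rw [hN, Fintype.card_pi]
    simp only [Fintype.card_fin]
    calc ∏ i : Fin d, r i = ∏ i : Fin d, (if (i : ℕ) < 2 then n / 4 else n) :=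
          Finset.prod_congr rfl (fun i _ => hr i)
    _ = (n / 4) ^ 2 * n ^ (d - 2) := by
        rw [Finset.prod_ite, Finset.prod_const, Finset.prod_const, hfcard, hfcard']
  have hsumr : ∑ i : Fin d, r i = 2 * (n / 4) + (d - 2) * n := by
    calc ∑ i : Fin d, r i = ∑ i : Fin d, (if (i : ℕ) < 2 then n / 4 else n) :=
          Finset.sum_congr rfl (fun i _ => hr i)
    _ = 2 * (n / 4) + (d - 2) * n := by
        rw [Finset.sum_ite, Finset.sum_const, Finset.sum_const, hfcard, hfcard',
          smul_eq_mul, smul_eq_mul]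
  have hWnat : W = (2 * (n / 4) + (d - 2) * n) + 1 := by
    rw [hW, Finset.sum_range_succ]
    congr 1
    · rw [← hsumr, ← Fin.sum_univ_eq_sum_range (fun k => rho d r k) d]
      refine Finset.sum_congr rfl fun i _ => ?_
      unfold rho
      rw [dif_pos i.isLt]
    · unfold rho
      rw [dif_neg (lt_irrefl d)]
  have hc4 : ((n / 4 : ℕ) : ℝ) = (n : ℝ) / 4 := by
    rw [Nat.cast_div hdvd (by norm_num)]
    norm_num
  have hWR : (W : ℝ) = 2 * ((n : ℝ) / 4) + ((d : ℝ) - 2) * (n : ℝ) + 1 := by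
    rw [hWnat]
    push_cast [hc4, Nat.cast_sub hd]
    ring
  have hNR : (N : ℝ) = ((n : ℝ) / 4) ^ 2 * (n : ℝ) ^ (d - 2) := by
    rw [hprodN]
    push_cast [hc4]
    ring
  -- final arithmetic
  have hxpos : (0 : ℝ) ≤ (C.card : ℝ) := Nat.cast_nonneg _
  have hα0 : (0 : ℝ) ≤ 1 - α := by linarith
  have hα0' : (0 : ℝ) ≤ α := by linarith
  have hNposR : (0 : ℝ) < N := by exact_mod_cast hNpos
  have hPb : (P.card : ℝ) ≤ (C.card : ℝ) * ((N : ℝ) * W) := by exact_mod_cast hPbound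
  have hkeyN : ((1 - α) * N) * N ≤ ((C.card : ℝ) * ((W : ℝ) + 2)) * N := by
    nlinarith [hsum, hPb, sq_nonneg ((C.card : ℝ)),
      mul_nonneg (mul_nonneg hα0' hxpos) hNposR.le]
  have hkey : (1 - α) * N ≤ (C.card : ℝ) * ((W : ℝ) + 2) :=
    le_of_mul_le_mul_right hkeyN hNposR
  have hW2pos : (0 : ℝ) < (W : ℝ) + 2 := by
    have : (0 : ℝ) ≤ (W : ℝ) := Nat.cast_nonneg _
    linarith
  have hxge : (1 - α) * N / ((W : ℝ) + 2) ≤ (C.card : ℝ) := by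
    rw [div_le_iff₀ hW2pos]
    exact hkey
  refine le_trans ?_ hxge
  have hn' : (4 : ℝ) ≤ (n : ℝ) := by exact_mod_cast hn4
  have hd' : (2 : ℝ) ≤ (d : ℝ) := by exact_mod_cast hd
  rw [div_le_div_iff₀ (by linarith) hW2pos]
  have hpow : (n : ℝ) ^ (d - 1) = (n : ℝ) ^ (d - 2) * n := by
    rw [← pow_succ]
    congr 1
    omega
  have hpnn : (0 : ℝ) ≤ (n : ℝ) ^ (d - 2) := by positivity
  rw [hWR, hNR, hpow]
  nlinarith [mul_nonneg (mul_nonneg hα0 (mul_nonneg hpnn (by linarith : (0:ℝ) ≤ (n:ℝ))))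
      (show (0:ℝ) ≤ (3 / 2) * (n : ℝ) - 3 by linarith)]
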